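/- arXiv:0906.5573 — 2 statements merged into one kernel-verified Lean document; each statement's English description precedes it below -/
import Mathlib

section
/- Let a_1 ≤ ... ≤ a_n be integers with a_1+...+a_j ≤ 0 for 1 ≤ j ≤ n-1 and a_1+...+a_n ≥ 1. Let A_1,...,A_n ∈ ℤ^n be given by A_j = ((a_{j+1}+...+a_n), ..., (a_{j+1}+...+a_n), -(a_1+...+a_j), ..., -(a_1+...+a_j)) with the first j coordinates equal to a_{j+1}+...+a_n and the last n-j equal to -(a_1+...+a_j), for 1 ≤ j ≤ n-1, and A_n = (1,1,...,1). Then every integer point λ of the cone {x ∈ ℝ^n : x_1 ≥ x_2 ≥ ... ≥ x_n ≥ 0 and a_1 x_1 + ... + a_n x_n ≥ 0} can be written uniquely as λ = p + ∑_{j=1}^n c_j A_j with c ∈ ℤ_{≥0}^n and p an integer point of the half-open parallelepiped ∑_{j=1}^n [0,1) A_j. -/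
/-- The generators `A_1, …, A_n` of the cone `K_Id`: for `1 ≤ j ≤ n-1`, the first `j`
coordinates of `A_j` equal `a_{j+1} + ⋯ + a_n` and the last `n-j` equal
`-(a_1 + ⋯ + a_j)`; and `A_n = (1, …, 1)`. -/
def genA (n : ℕ) (a : ℕ → ℤ) (j : ℕ) : Fin n → ℤ := fun i =>
  if j = n then 1
  else if (i : ℕ) < j then ∑ k ∈ Finset.Icc (j + 1) n, a k
  else -∑ k ∈ Finset.Icc 1 j, a k

namespace Stmt18Aux

/-- The matrix whose columns are the generators. -/
def Amat (n : ℕ) (a : ℕ → ℤ) : Matrix (Fin n) (Fin n) ℚ :=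
  Matrix.of fun i j => (genA n a ((j : ℕ) + 1) i : ℚ)

/-- The constraint matrix: rows `e_i - e_{i+1}` and a last row `a`. -/
def Mmat (n : ℕ) (a : ℕ → ℤ) : Matrix (Fin n) (Fin n) ℚ :=
  Matrix.of fun i j =>
    if (i : ℕ) + 1 < n then
      (if j = i then (1 : ℚ) else 0) - (if (j : ℕ) = (i : ℕ) + 1 then 1 else 0)
    else (a ((j : ℕ) + 1) : ℚ)

lemma sum_shift (f : ℕ → ℚ) (m N : ℕ) :
    ∑ k ∈ Finset.Ico m N, f (k + 1) = ∑ k ∈ Finset.Icc (m + 1) N, f k := by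
  rw [← Finset.Ico_add_one_right_eq_Icc, ← Finset.map_add_right_Ico m N 1, Finset.sum_map]
  rfl

lemma sum_a_split (n : ℕ) (a : ℕ → ℤ) (m : ℕ) (h : m ≤ n) :
    ∑ k ∈ Finset.Icc 1 m, (a k : ℚ) + ∑ k ∈ Finset.Icc (m + 1) n, (a k : ℚ)
      = ∑ k ∈ Finset.Icc 1 n, (a k : ℚ) := by
  have h1 : Finset.Icc 1 m = Finset.Ioc 0 m := Finset.Icc_add_one_left_eq_Ioc 0 m
  have h2 : Finset.Icc (m + 1) n = Finset.Ioc m n := Finset.Icc_add_one_left_eq_Ioc m n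
  have h3 : Finset.Icc 1 n = Finset.Ioc 0 n := Finset.Icc_add_one_left_eq_Ioc 0 n
  rw [h1, h2, h3]
  exact Finset.sum_Ioc_consecutive _ (Nat.zero_le m) h

lemma Amat_apply (n : ℕ) (a : ℕ → ℤ) (i j : Fin n) :
    Amat n a i j = (genA n a ((j : ℕ) + 1) i : ℚ) := rfl

lemma Amat_mulVec (n : ℕ) (a : ℕ → ℤ) (v : Fin n → ℚ) (i : Fin n) :
    (Amat n a).mulVec v i = ∑ j : Fin n, v j * (genA n a ((j : ℕ) + 1) i : ℚ) := by
  unfold Matrix.mulVec dotProduct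
  exact Finset.sum_congr rfl (fun j _ => mul_comm _ _)

lemma Mmat_mulVec (n : ℕ) (a : ℕ → ℤ) (v : Fin n → ℚ) (i : Fin n) :
    (Mmat n a).mulVec v i =
      if h : (i : ℕ) + 1 < n then v i - v ⟨(i : ℕ) + 1, h⟩
      else ∑ k : Fin n, (a ((k : ℕ) + 1) : ℚ) * v k := by
  unfold Matrix.mulVec dotProduct Mmat
  split_ifs with h
  · simp only [Matrix.of_apply, h, if_true]
    have hcond : ∀ k : Fin n, ((k : ℕ) = (i : ℕ) + 1) = (k = (⟨(i : ℕ) + 1, h⟩ : Fin n)) := by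
      intro k; simp [Fin.ext_iff]
    simp only [sub_mul, ite_mul, one_mul, zero_mul, Finset.sum_sub_distrib, hcond]
    rw [Finset.sum_ite_eq' Finset.univ i (fun k => v k),
      Finset.sum_ite_eq' Finset.univ (⟨(i : ℕ) + 1, h⟩ : Fin n) (fun k => v k)]
    simp
  · simp only [Matrix.of_apply, h, if_false]

lemma MA (n : ℕ) (a : ℕ → ℤ) :
    Mmat n a * Amat n a = (∑ k ∈ Finset.Icc 1 n, (a k : ℚ)) • 1 := by
  ext i j
  rw [Matrix.smul_apply, Matrix.one_apply, smul_eq_mul, mul_ite, mul_one, mul_zero]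
  rw [show (Mmat n a * Amat n a) i j = (Mmat n a).mulVec (fun k => Amat n a k j) i from rfl,
    Mmat_mulVec]
  have hjn : (j : ℕ) + 1 ≤ n := j.2
  by_cases h : (i : ℕ) + 1 < n
  · rw [dif_pos h]
    by_cases hij : i = j
    · subst hij
      rw [if_pos rfl]
      have hj : ¬ ((i : ℕ) + 1 = n) := by omega
      simp only [Amat_apply, genA, hj, if_false]
      rw [if_pos (by omega : (i : ℕ) < (i : ℕ) + 1),
        if_neg (by omega : ¬ ((i : ℕ) + 1 < (i : ℕ) + 1))]
      push_cast
      rw [sub_neg_eq_add, add_comm]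
      exact sum_a_split n a ((i : ℕ) + 1) (by omega)
    · rw [if_neg hij]
      have hij' : (i : ℕ) ≠ (j : ℕ) := fun hh => hij (Fin.ext hh)
      by_cases hj : (j : ℕ) + 1 = n
      · simp only [Amat_apply, genA, hj, if_pos rfl]
        simp
      · rcases Nat.lt_or_ge (i : ℕ) (j : ℕ) with hlt | hge
        · simp only [Amat_apply, genA, hj, if_false]
          rw [if_pos (by omega : (i : ℕ) < (j : ℕ) + 1),
            if_pos (by omega : (i : ℕ) + 1 < (j : ℕ) + 1)]
          ring
        · have hgt : (j : ℕ) < (i : ℕ) := by omega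
          simp only [Amat_apply, genA, hj, if_false]
          rw [if_neg (by omega : ¬ ((i : ℕ) < (j : ℕ) + 1)),
            if_neg (by omega : ¬ ((i : ℕ) + 1 < (j : ℕ) + 1))]
          ring
  · rw [dif_neg h]
    have hi2 : (i : ℕ) < n := i.2
    by_cases hj : (j : ℕ) + 1 = n
    · have hij : i = j := Fin.ext (by omega)
      rw [if_pos hij]
      have hone : ∀ k : Fin n, Amat n a k j = 1 := by
        intro k; simp [Amat_apply, genA, hj]
      calc ∑ k : Fin n, (a ((k : ℕ) + 1) : ℚ) * Amat n a k j
          = ∑ k : Fin n, (a ((k : ℕ) + 1) : ℚ) := by simp [hone]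
        _ = ∑ k ∈ Finset.range n, (a (k + 1) : ℚ) :=
            Fin.sum_univ_eq_sum_range (fun k => (a (k + 1) : ℚ)) n
        _ = ∑ k ∈ Finset.Icc 1 n, (a k : ℚ) := by
            rw [Finset.range_eq_Ico]
            exact sum_shift (fun k => (a k : ℚ)) 0 n
    · have hij : i ≠ j := by
        intro hh
        have := congrArg Fin.val hh
        omega
      rw [if_neg hij]
      set T : ℚ := ((∑ k ∈ Finset.Icc ((j : ℕ) + 1 + 1) n, a k : ℤ) : ℚ) with hT
      set P : ℚ := ((∑ k ∈ Finset.Icc 1 ((j : ℕ) + 1), a k : ℤ) : ℚ) with hP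
      have hTQ : T = ∑ k ∈ Finset.Icc ((j : ℕ) + 1 + 1) n, (a k : ℚ) := by
        rw [hT]; push_cast; rfl
      have hPQ : P = ∑ k ∈ Finset.Icc 1 ((j : ℕ) + 1), (a k : ℚ) := by
        rw [hP]; push_cast; rfl
      have hA : ∀ k : Fin n, Amat n a k j = if (k : ℕ) < (j : ℕ) + 1 then T else -P := by
        intro k
        simp only [Amat_apply, genA, hj, if_false]
        split_ifs <;> simp [hT, hP]
      calc ∑ k : Fin n, (a ((k : ℕ) + 1) : ℚ) * Amat n a k j
          = ∑ k : Fin n, (a ((k : ℕ) + 1) : ℚ) * (if (k : ℕ) < (j : ℕ) + 1 then T else -P) := by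
            exact Finset.sum_congr rfl (fun k _ => by rw [hA k])
        _ = ∑ k ∈ Finset.range n, (a (k + 1) : ℚ) * (if k < (j : ℕ) + 1 then T else -P) :=
            Fin.sum_univ_eq_sum_range
              (fun k => (a (k + 1) : ℚ) * (if k < (j : ℕ) + 1 then T else -P)) n
        _ = (∑ k ∈ Finset.Ico 0 ((j : ℕ) + 1), (a (k + 1) : ℚ) *
              (if k < (j : ℕ) + 1 then T else -P))
            + ∑ k ∈ Finset.Ico ((j : ℕ) + 1) n, (a (k + 1) : ℚ) *
              (if k < (j : ℕ) + 1 then T else -P) := by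
            rw [Finset.range_eq_Ico,
              Finset.sum_Ico_consecutive _ (Nat.zero_le ((j : ℕ) + 1)) (by omega : (j : ℕ) + 1 ≤ n)]
        _ = P * T + T * (-P) := by
            congr 1
            · rw [Finset.sum_congr rfl (fun k hk => by
                rw [if_pos (Finset.mem_Ico.mp hk).2]), ← Finset.sum_mul,
                sum_shift (fun k => (a k : ℚ)) 0 ((j : ℕ) + 1), ← hPQ]
            · rw [Finset.sum_congr rfl (fun k hk => by
                rw [if_neg (by have := (Finset.mem_Ico.mp hk).1; omega)]), ← Finset.sum_mul,
                sum_shift (fun k => (a k : ℚ)) ((j : ℕ) + 1) n, ← hTQ]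
        _ = 0 := by ring

end Stmt18Aux

open Stmt18Aux in
/-- Fundamental-parallelepiped tiling: under the stated hypotheses on `a`, every integer
point `λ` of the cone `{x : x₁ ≥ ⋯ ≥ xₙ ≥ 0, ∑ aᵢxᵢ ≥ 0}` is uniquely
`λ = p + ∑_j c_j A_j` with `c ∈ ℤ_{≥0}^n` and `p` an integer point of the half-open
parallelepiped `∑_j [0,1) A_j`. -/
theorem stmt_18 (n : ℕ) (hn : 1 ≤ n) (a : ℕ → ℤ)
    (hmono : ∀ i j, 1 ≤ i → i ≤ j → j ≤ n → a i ≤ a j)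
    (hpartial : ∀ j, 1 ≤ j → j ≤ n - 1 → ∑ i ∈ Finset.Icc 1 j, a i ≤ 0)
    (htotal : 1 ≤ ∑ i ∈ Finset.Icc 1 n, a i)
    (l : Fin n → ℤ)
    (hdec : ∀ (i : ℕ) (h : i + 1 < n), l ⟨i + 1, h⟩ ≤ l ⟨i, by omega⟩)
    (hnonneg : ∀ i, 0 ≤ l i)
    (hcone : 0 ≤ ∑ i : Fin n, a ((i : ℕ) + 1) * l i) :
    ∃! pc : (Fin n → ℤ) × (Fin n → ℕ),
      (∃ t : Fin n → ℚ, (∀ j, 0 ≤ t j ∧ t j < 1) ∧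
        ∀ i, (pc.1 i : ℚ) = ∑ j : Fin n, t j * (genA n a ((j : ℕ) + 1) i : ℚ)) ∧
      ∀ i, l i = pc.1 i + ∑ j : Fin n, (pc.2 j : ℤ) * genA n a ((j : ℕ) + 1) i := by
  classical
  set S : ℚ := ∑ k ∈ Finset.Icc 1 n, (a k : ℚ) with hS
  have hSpos : 0 < S := by
    have : (1 : ℚ) ≤ S := by
      rw [hS]; push_cast
      exact_mod_cast htotal
    linarith
  have hS0 : S ≠ 0 := ne_of_gt hSpos
  set M' : Matrix (Fin n) (Fin n) ℚ := S⁻¹ • Mmat n a with hM'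
  have hM'A : M' * Amat n a = 1 := by
    rw [hM', Matrix.smul_mul, MA n a, ← hS, smul_smul, inv_mul_cancel₀ hS0, one_smul]
  have hAM' : Amat n a * M' = 1 := mul_eq_one_comm.mp hM'A
  set lq : Fin n → ℚ := fun i => (l i : ℚ) with hlq
  set s : Fin n → ℚ := M'.mulVec lq with hs
  have hAs : (Amat n a).mulVec s = lq := by
    rw [hs, Matrix.mulVec_mulVec, hAM', Matrix.one_mulVec]
  have hinj : ∀ x y : Fin n → ℚ,
      (Amat n a).mulVec x = (Amat n a).mulVec y → x = y := by
    intro x y hxy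
    have := congrArg (M'.mulVec) hxy
    rwa [Matrix.mulVec_mulVec, Matrix.mulVec_mulVec, hM'A, Matrix.one_mulVec,
      Matrix.one_mulVec] at this
  have hs_nonneg : ∀ j, 0 ≤ s j := by
    intro j
    have hval : s j = S⁻¹ * (Mmat n a).mulVec lq j := by
      rw [hs, hM', Matrix.smul_mulVec]
      simp
    rw [hval, Mmat_mulVec n a lq j]
    apply mul_nonneg (inv_nonneg.mpr (le_of_lt hSpos))
    split_ifs with h
    · have hd := hdec (j : ℕ) h
      have hji : (⟨(j : ℕ), by omega⟩ : Fin n) = j := Fin.ext rfl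
      rw [hji] at hd
      simp only [hlq, sub_nonneg]
      exact_mod_cast hd
    · have hc : ((∑ i : Fin n, a ((i : ℕ) + 1) * l i : ℤ) : ℚ)
          = ∑ k : Fin n, (a ((k : ℕ) + 1) : ℚ) * lq k := by
        push_cast; rfl
      rw [← hc]
      exact_mod_cast hcone
  set c : Fin n → ℕ := fun j => (⌊s j⌋).toNat with hc
  have hcz : ∀ j, (c j : ℤ) = ⌊s j⌋ := fun j =>
    Int.toNat_of_nonneg (Int.floor_nonneg.mpr (hs_nonneg j))
  set p : Fin n → ℤ := fun i => l i - ∑ j : Fin n, (c j : ℤ) * genA n a ((j : ℕ) + 1) i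
    with hp
  have hlq_eq : ∀ i, lq i = ∑ j : Fin n, s j * (genA n a ((j : ℕ) + 1) i : ℚ) := by
    intro i
    rw [← hAs, Amat_mulVec]
  refine ⟨(p, c), ⟨⟨fun j => Int.fract (s j), fun j => ⟨Int.fract_nonneg _, Int.fract_lt_one _⟩,
    ?_⟩, ?_⟩, ?_⟩
  · intro i
    have hstep : ∑ j : Fin n, Int.fract (s j) * (genA n a ((j : ℕ) + 1) i : ℚ)
        = ∑ j : Fin n, s j * (genA n a ((j : ℕ) + 1) i : ℚ)
          - ∑ j : Fin n, ((c j : ℤ) : ℚ) * (genA n a ((j : ℕ) + 1) i : ℚ) := by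
      rw [← Finset.sum_sub_distrib]
      refine Finset.sum_congr rfl (fun j _ => ?_)
      rw [hcz j, Int.fract, ← sub_mul]
    rw [hstep, ← hlq_eq i]
    simp only [hp, hlq]
    push_cast
    ring
  · intro i
    simp only [hp]
    ring
  · rintro ⟨p', c'⟩ ⟨⟨t', ht'b, ht'e⟩, heq⟩
    have heq' : ∀ i, l i = p' i + ∑ j : Fin n, (c' j : ℤ) * genA n a ((j : ℕ) + 1) i := heq
    have ht'e' : ∀ i, (p' i : ℚ) = ∑ j : Fin n, t' j * (genA n a ((j : ℕ) + 1) i : ℚ) := ht'e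
    set x : Fin n → ℚ := fun j => t' j + ((c' j : ℤ) : ℚ) with hx
    have hxs : x = s := by
      apply hinj
      rw [hAs]
      funext i
      rw [Amat_mulVec]
      have hsplit : ∑ j : Fin n, x j * (genA n a ((j : ℕ) + 1) i : ℚ)
          = ∑ j : Fin n, t' j * (genA n a ((j : ℕ) + 1) i : ℚ)
            + ∑ j : Fin n, ((c' j : ℤ) : ℚ) * (genA n a ((j : ℕ) + 1) i : ℚ) := by
        rw [← Finset.sum_add_distrib]
        refine Finset.sum_congr rfl (fun j _ => ?_)
        simp only [hx]
        ring
      rw [hsplit, ← ht'e' i]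
      have hli := heq' i
      simp only [hlq]
      rw [hli]
      push_cast
      ring
    have hxj : ∀ j, t' j + ((c' j : ℤ) : ℚ) = s j := fun j => congrFun hxs j
    have hc'c : c' = c := by
      funext j
      have hfl : ⌊s j⌋ = (c' j : ℤ) := by
        rw [← hxj j, Int.floor_add_intCast, Int.floor_eq_zero_iff.mpr
          ⟨(ht'b j).1, (ht'b j).2⟩, zero_add]
      have : (c' j : ℤ) = (c j : ℤ) := by rw [hcz j, hfl]
      exact_mod_cast this
    have hp'p : p' = p := by
      funext i
      have h1 := heq' i
      rw [hc'c] at h1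
      have h2 : l i = p i + ∑ j : Fin n, (c j : ℤ) * genA n a ((j : ℕ) + 1) i := by
        simp only [hp]; ring
      omega
    rw [hp'p, hc'c]
end

section
/- Let a_1 ≤ ... ≤ a_n be integers with a_1+...+a_j ≤ 0 for 1 ≤ j ≤ n-1 and a_1+...+a_n ≥ 1, and let A_1,...,A_n be as in the fundamental-parallelepiped decomposition of the cone K_Id = {x : x_1 ≥ ... ≥ x_n ≥ 0, ∑ a_i x_i ≥ 0}. For 1 ≤ j ≤ n-1, the generator A_j satisfies A_{j,j} > A_{j+1,j} and A_{i,k} = A_{i+1,k} for all k ≠ i. Consequently, if p ∈ K_Id ∩ ℤ^n has p_j = p_{j+1}, then for any c ∈ ℤ_{≥0}^n the point r = p + A_j + ∑_i c_i A_i satisfies r_j > r_{j+1}. -/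
lemma genA_split (n j : ℕ) (a : ℕ → ℤ) (hj : j ≤ n) :
    ∑ i ∈ Finset.Icc 1 n, a i
      = ∑ i ∈ Finset.Icc 1 j, a i + ∑ i ∈ Finset.Icc (j + 1) n, a i := by
  rw [show Finset.Icc 1 n = Finset.Ioc 0 n by rw [← Finset.Icc_add_one_left_eq_Ioc]; rfl,
      show Finset.Icc 1 j = Finset.Ioc 0 j by rw [← Finset.Icc_add_one_left_eq_Ioc]; rfl,
      show Finset.Icc (j+1) n = Finset.Ioc j n by rw [Finset.Icc_add_one_left_eq_Ioc]]
  exact (Finset.sum_Ioc_consecutive a (Nat.zero_le j) hj).symm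

lemma genA_lt (n : ℕ) (a : ℕ → ℤ) (j : ℕ) (hj1 : 1 ≤ j) (hj2 : j ≤ n - 1)
    (htotal : 1 ≤ ∑ i ∈ Finset.Icc 1 n, a i)
    (h1 : j < n) (h2 : j - 1 < n) :
    genA n a j ⟨j, h1⟩ < genA n a j ⟨j - 1, h2⟩ := by
  have hjn : j ≠ n := by omega
  simp only [genA, hjn, if_false]
  rw [if_neg (by first | omega | simp | (simp; omega)), if_pos (by first | omega | simp | (simp; omega))]
  have := genA_split n j a (by omega)
  omega

lemma genA_const (n : ℕ) (a : ℕ → ℤ) (k i : ℕ) (hki : k ≠ i)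
    (h1 : i - 1 < n) (h2 : i < n) (hi1 : 1 ≤ i) :
    genA n a k ⟨i - 1, h1⟩ = genA n a k ⟨i, h2⟩ := by
  simp only [genA]
  by_cases hkn : k = n
  · simp [hkn]
  · rw [if_neg hkn, if_neg hkn]
    by_cases h : i < k
    · rw [if_pos (by first | omega | simp | (simp; omega)), if_pos (by first | omega | simp | (simp; omega))]
    · rw [if_neg (by first | omega | simp | (simp; omega)), if_neg (by first | omega | simp | (simp; omega))]

set_option maxHeartbeats 1000000 in
/-- Properties of the cone generators: for `1 ≤ j ≤ n-1`, `A_{j,j} > A_{j+1,j}` and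
`A_{i,k} = A_{i+1,k}` for `k ≠ i`; consequently if `p` is an integer point of the cone
`K_Id` with `p_j = p_{j+1}`, then `r = p + A_j + ∑_i c_i A_i` satisfies `r_j > r_{j+1}`
for any `c ∈ ℤ_{≥0}^n`. (`A_{i,k}` is the `i`-th coordinate of `A_k`.) -/
theorem stmt_19 (n : ℕ) (hn : 1 ≤ n) (a : ℕ → ℤ)
    (hmono : ∀ i j, 1 ≤ i → i ≤ j → j ≤ n → a i ≤ a j)
    (hpartial : ∀ j, 1 ≤ j → j ≤ n - 1 → ∑ i ∈ Finset.Icc 1 j, a i ≤ 0)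
    (htotal : 1 ≤ ∑ i ∈ Finset.Icc 1 n, a i) :
    (∀ (j : ℕ) (_hj1 : 1 ≤ j) (_hj2 : j ≤ n - 1),
      genA n a j ⟨j, by omega⟩ < genA n a j ⟨j - 1, by omega⟩) ∧
    (∀ (k i : ℕ) (_hk1 : 1 ≤ k) (_hk2 : k ≤ n) (_hi1 : 1 ≤ i) (_hi2 : i ≤ n - 1) (_hki : k ≠ i),
      genA n a k ⟨i - 1, by omega⟩ = genA n a k ⟨i, by omega⟩) ∧
    (∀ (j : ℕ) (_hj1 : 1 ≤ j) (_hj2 : j ≤ n - 1) (p : Fin n → ℤ),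
      (∀ (i : ℕ) (h : i + 1 < n), p ⟨i + 1, h⟩ ≤ p ⟨i, by omega⟩) →
      (∀ i, 0 ≤ p i) →
      0 ≤ ∑ i : Fin n, a ((i : ℕ) + 1) * p i →
      p ⟨j - 1, by omega⟩ = p ⟨j, by omega⟩ →
      ∀ c : Fin n → ℕ,
        p ⟨j, by omega⟩ + genA n a j ⟨j, by omega⟩ +
            ∑ i : Fin n, (c i : ℤ) * genA n a ((i : ℕ) + 1) ⟨j, by omega⟩ <
          p ⟨j - 1, by omega⟩ + genA n a j ⟨j - 1, by omega⟩ +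
            ∑ i : Fin n, (c i : ℤ) * genA n a ((i : ℕ) + 1) ⟨j - 1, by omega⟩) := by
  refine ⟨fun j hj1 hj2 => genA_lt n a j hj1 hj2 htotal _ _,
    fun k i _ _ hi1 _ hki => genA_const n a k i hki _ _ hi1, ?_⟩
  intro j hj1 hj2 p _ _ _ hpe c
  have hsum : ∑ i : Fin n, (c i : ℤ) * genA n a ((i : ℕ) + 1) ⟨j, by omega⟩
      ≤ ∑ i : Fin n, (c i : ℤ) * genA n a ((i : ℕ) + 1) ⟨j - 1, by omega⟩ := by
    apply Finset.sum_le_sum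
    intro i _
    by_cases h : (i : ℕ) + 1 = j
    · apply mul_le_mul_of_nonneg_left _ (by positivity)
      exact le_of_lt (h ▸ genA_lt n a ((i:ℕ)+1) (by omega) (by omega) htotal
        (by omega) (by omega))
    · rw [genA_const n a ((i:ℕ)+1) j h (by omega) (by omega) hj1]
  rw [hpe]
  exact add_lt_add_of_lt_of_le
    (add_lt_add_right (genA_lt n a j hj1 hj2 htotal (by omega) (by omega)) _) hsum
end
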